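/- arXiv:math/0405522 — 2 statements merged into one kernel-verified Lean document; each statement's English description precedes it below -/
import Mathlib

section
/- Let X be a compact metric space, f : X → X a continuous finite-to-one map, and ν a Borel probability measure on X. Suppose that for every Borel set A with ν(A) = 0 one has ν(f^{-1}(A)) = 0. Let L be the transfer operator Lψ(z) = Σ_{f(z')=z} exp(φ(z'))ψ(z') for a continuous function φ, and suppose L*ν = ν. If ψ_n → ψ ν-almost everywhere (Borel measurable functions), then Lψ_n → Lψ ν-almost everywhere. -/
open MeasureTheory Filter

noncomputable section

/-- The transfer operator `(Lψ)(z) = Σ_{f(z')=z} exp(φ(z')) ψ(z')` of a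
finite-to-one map `f` with potential `φ`, acting on Borel measurable
functions. -/
def transferOp {X : Type*} (f : X → X) (hfin : ∀ z, (f ⁻¹' {z}).Finite)
    (φ : X → ℝ) (ψ : X → ℝ) : X → ℝ :=
  fun z => ∑ z' ∈ (hfin z).toFinset, Real.exp (φ z') * ψ z'


set_option maxHeartbeats 1000000

open Set
open scoped ENNReal

section Helpers

variable {X : Type*} [MetricSpace X] [CompactSpace X]

lemma exists_compact_exhaustion_of_isOpen {U : Set X} (hU : IsOpen U) :
    ∃ K : ℕ → Set X, (∀ n, IsCompact (K n)) ∧ Monotone K ∧ (⋃ n, K n) = U := by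
  refine ⟨fun n => {x | ((n : ℝ≥0∞) + 1)⁻¹ ≤ EMetric.infEdist x Uᶜ}, fun n => ?_, ?_, ?_⟩
  · have : IsClosed {x : X | ((n : ℝ≥0∞) + 1)⁻¹ ≤ EMetric.infEdist x Uᶜ} :=
      isClosed_le continuous_const EMetric.continuous_infEdist
    exact this.isCompact
  · intro n m hnm x hx
    refine le_trans (ENNReal.inv_le_inv.mpr ?_) hx
    gcongr
  · ext x
    simp only [mem_iUnion, mem_setOf_eq]
    constructor
    · rintro ⟨n, hn⟩
      have hpos : 0 < EMetric.infEdist x Uᶜ :=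
        lt_of_lt_of_le (by simp [ENNReal.inv_pos]) hn
      have := EMetric.infEdist_pos_iff_notMem_closure.mp hpos
      rw [hU.isClosed_compl.closure_eq] at this
      simpa using this
    · intro hx
      have hpos : 0 < EMetric.infEdist x Uᶜ := by
        refine EMetric.infEdist_pos_iff_notMem_closure.mpr ?_
        rw [hU.isClosed_compl.closure_eq]
        simpa using hx
      obtain ⟨n, hn⟩ := ENNReal.exists_inv_nat_lt hpos.ne'
      refine ⟨n, le_trans ?_ hn.le⟩
      gcongr
      exact le_add_of_nonneg_right zero_le_one

lemma measurableSet_image_of_isOpen [MeasurableSpace X] [BorelSpace X]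
    {f : X → X} (hf : Continuous f) {U : Set X} (hU : IsOpen U) :
    MeasurableSet (f '' U) := by
  obtain ⟨K, hKc, -, hKU⟩ := exists_compact_exhaustion_of_isOpen hU
  rw [← hKU, image_iUnion]
  exact MeasurableSet.iUnion fun n => ((hKc n).image hf).isClosed.measurableSet

lemma measurable_fiberSum [MeasurableSpace X] [BorelSpace X]
    {f : X → X} (hf : Continuous f) (hfin : ∀ z, (f ⁻¹' {z}).Finite)
    {w : X → ℝ} (hw : Continuous w) (hw0 : ∀ x, 0 ≤ w x) :
    Measurable fun z => ∑ x ∈ (hfin z).toFinset, w x := by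
  classical
  haveI : Encodable (TopologicalSpace.countableBasis X) :=
    (TopologicalSpace.countable_countableBasis X).toEncodable
  set B := TopologicalSpace.countableBasis X with hB
  let PD : Finset (B × ℚ) → Prop := fun S =>
    ∀ p ∈ S, ∀ p' ∈ S, p ≠ p' → Disjoint (p.1 : Set X) (p'.1 : Set X)
  let E : B × ℚ → Set X := fun p => f '' ((p.1 : Set X) ∩ {x | (p.2 : ℝ) < w x})
  let g : Finset (B × ℚ) → X → ℝ≥0∞ := fun S z =>
    if PD S then ∑ p ∈ S, (E p).indicator (fun _ => ENNReal.ofReal (p.2 : ℝ)) z else 0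
  have hEmeas : ∀ p : B × ℚ, MeasurableSet (E p) := fun p =>
    measurableSet_image_of_isOpen hf
      ((TopologicalSpace.isOpen_of_mem_countableBasis p.1.2).inter
        (isOpen_lt continuous_const hw))
  have hgmeas : ∀ S, Measurable (g S) := by
    intro S
    by_cases h : PD S
    · have : Measurable fun z => ∑ p ∈ S,
          (E p).indicator (fun _ => ENNReal.ofReal (p.2 : ℝ)) z :=
        Finset.measurable_sum S (fun p _ => (measurable_const.indicator (hEmeas p)))
      simp only [g, if_pos h]
      exact this
    · simp only [g, h, if_false]
      exact measurable_const
  have key : ∀ z, (⨆ S, g S z) = ∑ x ∈ (hfin z).toFinset, ENNReal.ofReal (w x) := by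
    intro z
    refine le_antisymm (iSup_le fun S => ?_) ?_
    · -- each g S z is at most the fiber sum
      by_cases hS : PD S
      · haveI : Nonempty X := ⟨z⟩
        simp only [g, if_pos hS]
        have hind : ∀ p ∈ S, (E p).indicator (fun _ => ENNReal.ofReal (p.2 : ℝ)) z
            = if z ∈ E p then ENNReal.ofReal (p.2 : ℝ) else 0 := fun p _ => rfl
        rw [Finset.sum_congr rfl hind, ← Finset.sum_filter]
        set S' := S.filter (fun p => z ∈ E p) with hS'def
        have hwit : ∀ p ∈ S', ∃ x, x ∈ (p.1 : Set X) ∧ (p.2 : ℝ) < w x ∧ f x = z := by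
          intro p hp
          obtain ⟨x, hx, hfx⟩ := (Finset.mem_filter.mp hp).2
          exact ⟨x, hx.1, hx.2, hfx⟩
        choose! ξ hξ1 hξ2 hξ3 using hwit
        have hinj : ∀ p ∈ S', ∀ p' ∈ S', ξ p = ξ p' → p = p' := by
          intro p hp p' hp' heq
          by_contra hne
          have hd := hS p (Finset.mem_of_mem_filter _ hp) p' (Finset.mem_of_mem_filter _ hp') hne
          exact Set.disjoint_left.mp hd (hξ1 p hp) (heq ▸ hξ1 p' hp')
        calc ∑ p ∈ S', ENNReal.ofReal (p.2 : ℝ)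
            ≤ ∑ p ∈ S', ENNReal.ofReal (w (ξ p)) :=
              Finset.sum_le_sum fun p hp => ENNReal.ofReal_le_ofReal (hξ2 p hp).le
          _ = ∑ y ∈ S'.image ξ, ENNReal.ofReal (w y) := by rw [Finset.sum_image hinj]
          _ ≤ ∑ x ∈ (hfin z).toFinset, ENNReal.ofReal (w x) := by
              refine Finset.sum_le_sum_of_subset ?_
              intro y hy
              obtain ⟨p, hp, rfl⟩ := Finset.mem_image.mp hy
              exact (hfin z).mem_toFinset.mpr (hξ3 p hp)
      · simp [g, hS]
    · -- approximation from below
      set T := (hfin z).toFinset with hTdef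
      rcases Finset.eq_empty_or_nonempty T with hT | hT
      · simp [hT]
      refine ENNReal.le_of_forall_pos_le_add fun ε hε _ => ?_
      set k := T.card with hk
      have hkpos : 0 < (k : ℝ) := by
        have := Finset.card_pos.mpr hT
        exact_mod_cast this
      set ε' : ℝ := (ε : ℝ) / k with hε'
      have hε'pos : 0 < ε' := div_pos (by exact_mod_cast hε) hkpos
      set δ : ℝ := if h : T.offDiag.Nonempty then
          (T.offDiag.inf' h fun p => dist p.1 p.2) / 3 else 1 with hδdef
      have hδ : 0 < δ := by
        by_cases h : T.offDiag.Nonempty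
        · rw [hδdef, dif_pos h]
          refine div_pos ?_ (by norm_num)
          rw [Finset.lt_inf'_iff]
          intro p hp
          exact dist_pos.mpr (Finset.mem_offDiag.mp hp).2.2
        · rw [hδdef, dif_neg h]; norm_num
      have hδ3 : ∀ x ∈ T, ∀ y ∈ T, x ≠ y → 3 * δ ≤ dist x y := by
        intro x hx y hy hxy
        have hne : T.offDiag.Nonempty := ⟨(x, y), Finset.mem_offDiag.mpr ⟨hx, hy, hxy⟩⟩
        rw [hδdef, dif_pos hne]
        have : (T.offDiag.inf' hne fun p => dist p.1 p.2) ≤ dist x y :=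
          Finset.inf'_le (f := fun p : X × X => dist p.1 p.2)
            (show (x, y) ∈ T.offDiag from Finset.mem_offDiag.mpr ⟨hx, hy, hxy⟩)
        linarith
      have hballs : ∀ x ∈ T, ∀ y ∈ T, x ≠ y →
          Disjoint (Metric.ball x δ) (Metric.ball y δ) := by
        intro x hx y hy hxy
        refine Metric.ball_disjoint_ball ?_
        have := hδ3 x hx y hy hxy
        linarith
      have hex : ∀ x : X, ∃ (V : B) (q : ℚ), x ∈ T →
          x ∈ (V : Set X) ∧ (V : Set X) ⊆ Metric.ball x δ ∧ (q : ℝ) < w x ∧ w x - ε' < q := by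
        intro x
        by_cases hx : x ∈ T
        · obtain ⟨V, hVB, hxV, hVb⟩ :=
            (TopologicalSpace.isBasis_countableBasis X).exists_subset_of_mem_open
              (Metric.mem_ball_self hδ) Metric.isOpen_ball
          obtain ⟨q, hq1, hq2⟩ := exists_rat_btwn (show w x - ε' < w x by linarith)
          exact ⟨⟨V, hVB⟩, q, fun _ => ⟨hxV, hVb, hq2, hq1⟩⟩
        · obtain ⟨V, hVB, -, -⟩ :=
            (TopologicalSpace.isBasis_countableBasis X).exists_subset_of_mem_open
              (Set.mem_univ x) isOpen_univ
          exact ⟨⟨V, hVB⟩, 0, fun h => absurd h hx⟩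
      choose V q hVq using hex
      have hmemV : ∀ x ∈ T, x ∈ (V x : Set X) := fun x hx => (hVq x hx).1
      have hsubV : ∀ x ∈ T, (V x : Set X) ⊆ Metric.ball x δ := fun x hx => (hVq x hx).2.1
      have hqlt : ∀ x ∈ T, (q x : ℝ) < w x := fun x hx => (hVq x hx).2.2.1
      have hqgt : ∀ x ∈ T, w x - ε' < q x := fun x hx => (hVq x hx).2.2.2
      have hVdisj : ∀ x ∈ T, ∀ y ∈ T, x ≠ y → Disjoint (V x : Set X) (V y : Set X) :=
        fun x hx y hy hxy => (hballs x hx y hy hxy).mono (hsubV x hx) (hsubV y hy)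
      have hVinj : ∀ x ∈ T, ∀ y ∈ T, (V x, q x) = (V y, q y) → x = y := by
        intro x hx y hy heq
        by_contra hxy
        have h1 : (V x : Set X) = (V y : Set X) := by rw [(Prod.mk.injEq _ _ _ _).mp heq |>.1]
        exact Set.disjoint_left.mp (hVdisj x hx y hy hxy) (hmemV x hx) (h1 ▸ hmemV x hx)
      set S : Finset (B × ℚ) := T.image fun x => (V x, q x) with hSdef
      have hPD : PD S := by
        intro p hp p' hp' hne
        obtain ⟨x, hx, rfl⟩ := Finset.mem_image.mp hp
        obtain ⟨y, hy, rfl⟩ := Finset.mem_image.mp hp'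
        have hxy : x ≠ y := fun h => hne (by rw [h])
        exact hVdisj x hx y hy hxy
      have hzE : ∀ x ∈ T, z ∈ E (V x, q x) := by
        intro x hx
        exact ⟨x, ⟨hmemV x hx, hqlt x hx⟩, (hfin z).mem_toFinset.mp hx⟩
      have hgS : g S z = ∑ x ∈ T, ENNReal.ofReal (q x : ℝ) := by
        simp only [g, if_pos hPD]
        rw [hSdef, Finset.sum_image hVinj]
        refine Finset.sum_congr rfl fun x hx => ?_
        simp [Set.indicator_of_mem (hzE x hx)]
      have hbound : ∑ x ∈ T, ENNReal.ofReal (w x)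
          ≤ (∑ x ∈ T, ENNReal.ofReal (q x : ℝ)) + ε := by
        calc ∑ x ∈ T, ENNReal.ofReal (w x)
            ≤ ∑ x ∈ T, (ENNReal.ofReal (q x : ℝ) + ENNReal.ofReal ε') := by
              refine Finset.sum_le_sum fun x hx => ?_
              refine le_trans (ENNReal.ofReal_le_ofReal
                (show w x ≤ (q x : ℝ) + ε' by have := hqgt x hx; linarith)) ?_
              exact ENNReal.ofReal_add_le
          _ = (∑ x ∈ T, ENNReal.ofReal (q x : ℝ)) + k • ENNReal.ofReal ε' := by
              rw [Finset.sum_add_distrib, Finset.sum_const]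
          _ ≤ (∑ x ∈ T, ENNReal.ofReal (q x : ℝ)) + ε := by
              refine add_le_add_right ?_ _
              have : (k : ℝ≥0∞) * ENNReal.ofReal ε' = ENNReal.ofReal ((k : ℝ) * ε') := by
                rw [ENNReal.ofReal_mul (by positivity)]
                simp
              rw [nsmul_eq_mul, this]
              have hkε : (k : ℝ) * ε' = (ε : ℝ) := by
                rw [hε']; field_simp
              rw [hkε, ENNReal.ofReal_coe_nnreal]
      refine le_trans hbound ?_
      exact add_le_add_left (hgS ▸ le_iSup (fun S => g S z) S) _
  have heq : (fun z => ∑ x ∈ (hfin z).toFinset, w x)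
      = fun z => (⨆ S, g S z).toReal := by
    funext z
    rw [key z, ENNReal.toReal_sum (fun x _ => ENNReal.ofReal_ne_top)]
    exact Finset.sum_congr rfl fun x _ => (ENNReal.toReal_ofReal (hw0 x)).symm
  rw [heq]
  exact (Measurable.iSup hgmeas).ennreal_toReal

lemma image_null_of_null [MeasurableSpace X] [BorelSpace X]
    {f : X → X} (hf : Continuous f) (hfin : ∀ z, (f ⁻¹' {z}).Finite)
    {ν : Measure X} [IsProbabilityMeasure ν]
    {φ : X → ℝ} (hφ : Continuous φ)
    (hfix : ∀ ψ : X → ℝ, Continuous ψ →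
      ∫ z, transferOp f hfin φ ψ z ∂ν = ∫ z, ψ z ∂ν)
    {A : Set X} (hA : MeasurableSet A) (hA0 : ν A = 0) :
    ν (f '' A) = 0 := by
  rcases isEmpty_or_nonempty X with hX | hX
  · simp [Set.eq_empty_of_isEmpty (f '' A)]
  obtain ⟨x₀, -, hmin⟩ :=
    isCompact_univ.exists_isMinOn univ_nonempty hφ.continuousOn
  have hx₀ : ∀ x : X, φ x₀ ≤ φ x := fun x => hmin (mem_univ x)
  set c : ℝ := Real.exp (φ x₀) with hc
  have hcpos : 0 < c := Real.exp_pos _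
  -- L1 and its integrability
  set L1 : X → ℝ := fun z => ∑ x ∈ (hfin z).toFinset, Real.exp (φ x) with hL1
  have hL1meas : Measurable L1 :=
    measurable_fiberSum hf hfin (Real.continuous_exp.comp hφ)
      (fun x => (Real.exp_pos _).le)
  have hL1eq : transferOp f hfin φ (fun _ => 1) = L1 := by
    funext z; simp [transferOp, hL1]
  have hL1int : Integrable L1 ν := by
    by_contra h
    have h1 := hfix (fun _ => 1) continuous_const
    rw [hL1eq, integral_undef h] at h1
    simp [integral_const] at h1
  refine le_antisymm ?_ zero_le
  refine ENNReal.le_of_forall_pos_le_add fun ε hε _ => ?_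
  rw [zero_add]
  have hcε : 0 < c * (ε : ℝ) := mul_pos hcpos (by exact_mod_cast hε)
  have hν0 : ν A < ENNReal.ofReal (c * ε) := by
    rw [hA0]; exact ENNReal.ofReal_pos.mpr hcε
  obtain ⟨U, hAU, hUopen, hU⟩ := Set.exists_isOpen_lt_of_lt A _ hν0
  obtain ⟨K, hKc, hKmono, hKU⟩ := exists_compact_exhaustion_of_isOpen hUopen
  have key : ∀ n, ν (f '' K n) ≤ ENNReal.ofReal (ε : ℝ) := by
    intro n
    have hKsub : K n ⊆ U := hKU ▸ subset_iUnion K n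
    obtain ⟨g, hg0, hg1, hg01⟩ :=
      exists_continuous_zero_one_of_isCompact
        (hUopen.isClosed_compl.isCompact) (hKc n).isClosed
        (Set.disjoint_left.mpr fun x hxc hxK => hxc (hKsub hxK))
    set Lg : X → ℝ := transferOp f hfin φ ⇑g with hLg
    have hLgmeas : Measurable Lg :=
      measurable_fiberSum hf hfin ((Real.continuous_exp.comp hφ).mul g.continuous)
        (fun x => mul_nonneg (Real.exp_pos _).le (hg01 x).1)
    have hLgnn : ∀ z, 0 ≤ Lg z := fun z =>
      Finset.sum_nonneg fun x _ => mul_nonneg (Real.exp_pos _).le (hg01 x).1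
    have hLgle : ∀ z, Lg z ≤ L1 z := fun z =>
      Finset.sum_le_sum fun x _ => by
        have := (hg01 x).2
        nlinarith [Real.exp_pos (φ x)]
    have hLgint : Integrable Lg ν := by
      refine hL1int.mono' hLgmeas.aestronglyMeasurable (ae_of_all _ fun z => ?_)
      rw [Real.norm_eq_abs, abs_of_nonneg (hLgnn z)]
      exact hLgle z
    have hgint : Integrable (⇑g) ν :=
      g.continuous.integrable_of_hasCompactSupport (HasCompactSupport.of_compactSpace _)
    have hup : ∫ z, g z ∂ν ≤ (ν U).toReal := by
      have hle : ∀ z, g z ≤ Set.indicator U (fun _ => (1 : ℝ)) z := by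
        intro z
        by_cases hz : z ∈ U
        · simpa [Set.indicator_of_mem hz] using (hg01 z).2
        · simp [Set.indicator_of_notMem hz, hg0 (Set.mem_compl hz)]
      calc ∫ z, g z ∂ν ≤ ∫ z, Set.indicator U (fun _ => (1 : ℝ)) z ∂ν :=
            integral_mono hgint ((integrable_const (1 : ℝ)).indicator
              hUopen.measurableSet) hle
        _ = (ν U).toReal := by
            rw [integral_indicator_const (1 : ℝ) hUopen.measurableSet]; simp [Measure.real]
    have hKim : MeasurableSet (f '' K n) :=
      (((hKc n).image hf).isClosed).measurableSet
    have hgeq : ∀ z ∈ f '' K n, c ≤ Lg z := by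
      rintro z ⟨x, hxK, rfl⟩
      have hxmem : x ∈ (hfin (f x)).toFinset :=
        (hfin (f x)).mem_toFinset.mpr rfl
      have h1 : Real.exp (φ x) * g x ≤ Lg (f x) :=
        Finset.single_le_sum
          (f := fun y => Real.exp (φ y) * g y)
          (fun y _ => mul_nonneg (Real.exp_pos _).le (hg01 y).1) hxmem
      have h2 : g x = 1 := hg1 hxK
      rw [h2, mul_one] at h1
      exact le_trans (Real.exp_le_exp.mpr (hx₀ x)) h1
    have hlow : c * (ν (f '' K n)).toReal ≤ ∫ z, Lg z ∂ν :=
      le_trans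
        (by
        have := setIntegral_ge_of_const_le_real hKim (measure_ne_top ν _) hgeq
          hLgint.integrableOn
        exact this)
        (setIntegral_le_integral hLgint (ae_of_all _ hLgnn))
    have hUlt : (ν U).toReal < c * ε := by
      have := (ENNReal.toReal_lt_toReal (measure_ne_top ν U)
        ENNReal.ofReal_ne_top).mpr hU
      rwa [ENNReal.toReal_ofReal hcε.le] at this
    have hfixg := hfix (⇑g) g.continuous
    rw [← hLg] at hfixg
    have : c * (ν (f '' K n)).toReal < c * ε := by
      calc c * (ν (f '' K n)).toReal ≤ ∫ z, Lg z ∂ν := hlow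
        _ = ∫ z, g z ∂ν := hfixg
        _ ≤ (ν U).toReal := hup
        _ < c * ε := hUlt
    have hlt : (ν (f '' K n)).toReal < ε := lt_of_mul_lt_mul_left this hcpos.le
    rw [← ENNReal.ofReal_toReal (measure_ne_top ν (f '' K n))]
    exact ENNReal.ofReal_le_ofReal hlt.le
  have hmono : Monotone fun n => f '' K n := fun a b h => image_mono (hKmono h)
  calc ν (f '' A) ≤ ν (f '' U) := measure_mono (image_mono hAU)
    _ = ⨆ n, ν (f '' K n) := by
        rw [← hKU, image_iUnion]
        exact hmono.directed_le.measure_iUnion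
    _ ≤ ENNReal.ofReal (ε : ℝ) := iSup_le key
    _ = (ε : ℝ≥0∞) := ENNReal.ofReal_coe_nnreal

end Helpers

/-- If `ν` is backward quasi-invariant (`ν(A) = 0 ⟹ ν(f⁻¹A) = 0`) and
`L*ν = ν`, then the transfer operator preserves `ν`-almost everywhere
convergence of Borel measurable functions. -/
theorem transferOp_ae_tendsto {X : Type*} [MetricSpace X] [CompactSpace X]
    [MeasurableSpace X] [BorelSpace X]
    (f : X → X) (hf : Continuous f) (hfin : ∀ z, (f ⁻¹' {z}).Finite)
    (ν : Measure X) [IsProbabilityMeasure ν]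
    (hnull : ∀ A : Set X, MeasurableSet A → ν A = 0 → ν (f ⁻¹' A) = 0)
    (φ : X → ℝ) (hφ : Continuous φ)
    (hfix : ∀ ψ : X → ℝ, Continuous ψ →
      ∫ z, transferOp f hfin φ ψ z ∂ν = ∫ z, ψ z ∂ν)
    (ψ : X → ℝ) (hψ : Measurable ψ)
    (ψn : ℕ → X → ℝ) (hψn : ∀ n, Measurable (ψn n))
    (hconv : ∀ᵐ z ∂ν, Tendsto (fun n => ψn n z) atTop (nhds (ψ z))) :
    ∀ᵐ z ∂ν, Tendsto (fun n => transferOp f hfin φ (ψn n) z) atTop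
      (nhds (transferOp f hfin φ ψ z)) := by
  set N : Set X := {z | ¬ Tendsto (fun n => ψn n z) atTop (nhds (ψ z))} with hN
  have hN0 : ν N = 0 := by
    rw [ae_iff] at hconv
    exact hconv
  set A : Set X := toMeasurable ν N with hA
  have hA0 : ν A = 0 := by rw [hA, measure_toMeasurable]; exact hN0
  have hNA : N ⊆ A := subset_toMeasurable ν N
  have himg : ν (f '' A) = 0 :=
    image_null_of_null hf hfin hφ hfix (measurableSet_toMeasurable ν N) hA0
  have hae : ∀ᵐ z ∂ν, z ∉ f '' A := by
    rw [ae_iff]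
    simp only [not_not]
    exact himg
  filter_upwards [hae] with z hz
  have hterm : ∀ x ∈ (hfin z).toFinset,
      Tendsto (fun n => Real.exp (φ x) * ψn n x) atTop (nhds (Real.exp (φ x) * ψ x)) := by
    intro x hx
    have hfx : f x = z := (hfin z).mem_toFinset.mp hx
    have hxA : x ∉ A := fun h => hz ⟨x, h, hfx⟩
    have hxN : x ∉ N := fun h => hxA (hNA h)
    have : Tendsto (fun n => ψn n x) atTop (nhds (ψ x)) := not_not.mp hxN
    exact this.const_mul _
  exact tendsto_finset_sum _ hterm

end
end

section
/- Let g : U → V be a diffeomorphism between open subsets of the Riemann sphere (or of ℝ²), t > 0, K ⊆ U compact, and A ⊆ K a Borel set. Then H^t(g(A)) = ∫_A ‖g'‖^t dH^t, where H^t is the t-dimensional Hausdorff measure and ‖g'(z)‖ the operator norm of the derivative at z (with g conformal, so the derivative is a scalar multiple of an isometry at each point). -/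
open MeasureTheory
open scoped ENNReal

noncomputable section

/-- Change of variables for Hausdorff measure under a conformal diffeomorphism
`g : U → V` between open subsets of `ℂ ≅ ℝ²`: for every compact `K ⊆ U` and
every Borel set `A ⊆ K`, `H^t(g(A)) = ∫_A ‖g'‖^t dH^t`. -/
theorem hausdorff_change_of_variables
    (U V : Set ℂ) (hU : IsOpen U) (hV : IsOpen V)
    (g h : ℂ → ℂ) (g' : ℂ → ℂ)
    (hbij : Set.BijOn g U V) (hinv : Set.InvOn h g U V)
    (hg : ∀ z ∈ U, HasDerivAt g (g' z) z)
    (hh : DifferentiableOn ℂ h V)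
    (t : ℝ) (ht : 0 < t)
    (K : Set ℂ) (hK : IsCompact K) (hKU : K ⊆ U)
    (A : Set ℂ) (hA : A ⊆ K) (hAm : MeasurableSet A) :
    μH[t] (g '' A)
      = ∫⁻ z in A, ENNReal.ofReal (‖g' z‖ ^ t) ∂(μH[t]) := by
  classical
  -- trivial case: K empty
  rcases K.eq_empty_or_nonempty with hKe | hKne
  · have hAe : A = ∅ := Set.subset_empty_iff.mp (hKe ▸ hA)
    simp [hAe]
  -- a compact neighborhood K' of K inside U
  obtain ⟨r, hr0, hrU⟩ := hK.exists_cthickening_subset_open hU hKU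
  set K' : Set ℂ := Metric.cthickening r K with hK'def
  have hK'comp : IsCompact K' := hK.cthickening
  have hKK' : K ⊆ K' := Metric.self_subset_cthickening K
  have hK'U : K' ⊆ U := hrU
  have hK'ne : K'.Nonempty := hKne.mono hKK'
  -- basic facts about g and g'
  have hgd : DifferentiableOn ℂ g U := fun z hz =>
    (hg z hz).differentiableAt.differentiableWithinAt
  have hg'cont : ContinuousOn g' U := by
    have h1 : AnalyticOnNhd ℂ g U := hgd.analyticOnNhd hU
    have h2 : ContinuousOn (deriv g) U := (h1.deriv).continuousOn
    exact h2.congr fun z hz => ((hg z hz).deriv).symm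
  have hg'ne : ∀ z ∈ U, g' z ≠ 0 := by
    intro z hz
    have hgz : g z ∈ V := hbij.mapsTo hz
    have hhd : HasDerivAt h (deriv h (g z)) (g z) :=
      ((hh.differentiableAt (hV.mem_nhds hgz))).hasDerivAt
    have hcomp : HasDerivAt (h ∘ g) (deriv h (g z) * g' z) z := hhd.comp z (hg z hz)
    have hid : HasDerivAt (h ∘ g) 1 z := by
      have heq : (h ∘ g) =ᶠ[nhds z] id :=
        Filter.eventually_of_mem (hU.mem_nhds hz) fun w hw => hinv.1 hw
      exact (hasDerivAt_id z).congr_of_eventuallyEq heq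
    have huniq : deriv h (g z) * g' z = 1 := hcomp.unique hid
    intro h0
    rw [h0, mul_zero] at huniq
    exact one_ne_zero huniq.symm
  -- minimum of ‖g'‖ on K'
  obtain ⟨zmin, hzmin, hmin⟩ := hK'comp.exists_isMinOn hK'ne
    ((continuous_norm.comp_continuousOn (hg'cont.mono hK'U)))
  set c : ℝ := ‖g' zmin‖ with hcdef
  have hc0 : 0 < c := norm_pos_iff.mpr (hg'ne zmin (hK'U hzmin))
  have hcle : ∀ z ∈ K', c ≤ ‖g' z‖ := fun z hz => hmin hz
  -- uniform continuity of g' on K'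
  have hg'unif : UniformContinuousOn g' K' :=
    hK'comp.uniformContinuousOn_of_continuous (hg'cont.mono hK'U)
  set I : ℝ≥0∞ := ∫⁻ z in A, ENNReal.ofReal (‖g' z‖ ^ t) ∂(μH[t]) with hIdef
  -- main two-sided estimate for each θ ∈ (0,1)
  have main : ∀ θ : ℝ, 0 < θ → θ < 1 →
      μH[t] (g '' A) ≤ ENNReal.ofReal ((1 + θ) ^ t) * I ∧
      ENNReal.ofReal ((1 - θ) ^ t) * I ≤ μH[t] (g '' A) := by
    intro θ hθ0 hθ1
    set ε : ℝ := θ * c / 2 with hεdef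
    have hε0 : 0 < ε := by positivity
    have h2ε : 2 * ε = θ * c := by rw [hεdef]; ring
    have hεc : ε < c := by rw [hεdef]; nlinarith
    obtain ⟨δ₁, hδ₁0, hδ₁⟩ := Metric.uniformContinuousOn_iff.mp hg'unif ε hε0
    set δ : ℝ := min (δ₁ / 2) r with hδdef
    have hδ0 : 0 < δ := lt_min (half_pos hδ₁0) hr0
    have hδr : δ ≤ r := min_le_right _ _
    have hball : ∀ z₀ ∈ K, Metric.closedBall z₀ δ ⊆ K' := fun z₀ h0 =>
      (Metric.closedBall_subset_cthickening h0 δ).trans (Metric.cthickening_mono hδr K)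
    have hg'close : ∀ z₀ ∈ K, ∀ ζ ∈ Metric.closedBall z₀ δ, ‖g' ζ - g' z₀‖ ≤ ε := by
      intro z₀ h0 ζ hζ
      have h1 : dist ζ z₀ < δ₁ :=
        lt_of_le_of_lt (Metric.mem_closedBall.mp hζ)
          (lt_of_le_of_lt (min_le_left _ _) (half_lt_self hδ₁0))
      have h2 := hδ₁ ζ (hball z₀ h0 hζ) z₀ (hKK' h0) h1
      rw [dist_eq_norm] at h2
      exact h2.le
    -- mean value estimate
    have hMVT : ∀ z₀ ∈ K, ∀ z ∈ Metric.closedBall z₀ δ, ∀ w ∈ Metric.closedBall z₀ δ,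
        ‖(g z - g' z₀ * z) - (g w - g' z₀ * w)‖ ≤ ε * ‖z - w‖ := by
      intro z₀ h0 z hz w hw
      refine Convex.norm_image_sub_le_of_norm_hasFDerivWithin_le
        (f := fun ζ => g ζ - g' z₀ * ζ)
        (f' := fun ζ => ContinuousLinearMap.smulRight (1 : ℂ →L[ℂ] ℂ) (g' ζ - g' z₀))
        (fun ζ hζ => ?_) (fun ζ hζ => ?_) (convex_closedBall z₀ δ) hw hz
      · have hζU : ζ ∈ U := hK'U (hball z₀ h0 hζ)
        have hd : HasDerivAt (fun ζ => g ζ - g' z₀ * ζ) (g' ζ - g' z₀) ζ := by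
          have hd1 := (hg ζ hζU).sub ((hasDerivAt_id ζ).const_mul (g' z₀))
          rw [mul_one] at hd1; exact hd1
        exact hd.hasFDerivAt.hasFDerivWithinAt
      · rw [ContinuousLinearMap.norm_smulRight_apply, ContinuousLinearMap.one_def,
          ContinuousLinearMap.norm_id, one_mul]
        exact hg'close z₀ h0 ζ hζ
    have hub : ∀ z₀ ∈ K, ∀ z ∈ Metric.closedBall z₀ δ, ∀ w ∈ Metric.closedBall z₀ δ,
        dist (g z) (g w) ≤ (‖g' z₀‖ + ε) * dist z w := by
      intro z₀ h0 z hz w hw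
      have h1 := hMVT z₀ h0 z hz w hw
      have h2 : g z - g w = ((g z - g' z₀ * z) - (g w - g' z₀ * w)) + g' z₀ * (z - w) := by
        ring
      rw [dist_eq_norm, dist_eq_norm, h2]
      calc ‖((g z - g' z₀ * z) - (g w - g' z₀ * w)) + g' z₀ * (z - w)‖
          ≤ ‖(g z - g' z₀ * z) - (g w - g' z₀ * w)‖ + ‖g' z₀ * (z - w)‖ := norm_add_le _ _
        _ ≤ ε * ‖z - w‖ + ‖g' z₀‖ * ‖z - w‖ := by
            rw [norm_mul]; exact add_le_add_left h1 _
        _ = (‖g' z₀‖ + ε) * ‖z - w‖ := by ring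
    have hlb : ∀ z₀ ∈ K, ∀ z ∈ Metric.closedBall z₀ δ, ∀ w ∈ Metric.closedBall z₀ δ,
        (‖g' z₀‖ - ε) * dist z w ≤ dist (g z) (g w) := by
      intro z₀ h0 z hz w hw
      have h1 := hMVT z₀ h0 z hz w hw
      have h2 : g' z₀ * (z - w) = (g z - g w) - ((g z - g' z₀ * z) - (g w - g' z₀ * w)) := by
        ring
      rw [dist_eq_norm, dist_eq_norm]
      have h3 : ‖g' z₀‖ * ‖z - w‖ ≤ ‖g z - g w‖ + ε * ‖z - w‖ := by
        calc ‖g' z₀‖ * ‖z - w‖ = ‖g' z₀ * (z - w)‖ := (norm_mul _ _).symm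
          _ ≤ ‖g z - g w‖ + ‖(g z - g' z₀ * z) - (g w - g' z₀ * w)‖ := by
              rw [h2]; exact norm_sub_le _ _
          _ ≤ ‖g z - g w‖ + ε * ‖z - w‖ := add_le_add_right h1 _
      nlinarith [norm_nonneg (z - w)]
    -- countable cover of K by δ-balls centered in K
    obtain ⟨T, hTK, hTfin, hTcov⟩ :=
      totallyBounded_iff_subset.mp hK.totallyBounded _ (Metric.dist_mem_uniformity hδ0)
    have hTne : T.Nonempty := by
      obtain ⟨z0, hz0⟩ := hKne
      obtain ⟨y, hy, -⟩ := Set.mem_iUnion₂.mp (hTcov hz0)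
      exact ⟨y, hy⟩
    obtain ⟨f0, hf0⟩ := hTfin.countable.exists_surjective hTne
    set p : ℕ → ℂ := fun n => (f0 n : ℂ) with hpdef
    have hpK : ∀ n, p n ∈ K := fun n => hTK (f0 n).2
    have hcov : A ⊆ ⋃ n, Metric.ball (p n) δ := by
      intro z hz
      obtain ⟨y, hy, hzy⟩ := Set.mem_iUnion₂.mp (hTcov (hA hz))
      obtain ⟨n, hn⟩ := hf0 ⟨y, hy⟩
      refine Set.mem_iUnion.mpr ⟨n, Metric.mem_ball.mpr ?_⟩
      have hpn : p n = y := congrArg Subtype.val hn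
      rw [hpn]
      exact hzy
    set S : ℕ → Set ℂ := fun n => A ∩ Metric.ball (p n) δ with hSdef
    set E : ℕ → Set ℂ := disjointed S with hEdef
    have hEm : ∀ n, MeasurableSet (E n) :=
      MeasurableSet.disjointed fun n => hAm.inter Metric.isOpen_ball.measurableSet
    have hEdisj : Pairwise (Function.onFun Disjoint E) := disjoint_disjointed S
    have hES : ∀ n, E n ⊆ S n := fun n => disjointed_subset S n
    have hEA : ∀ n, E n ⊆ A := fun n => (hES n).trans Set.inter_subset_left
    have hEb : ∀ n, E n ⊆ Metric.closedBall (p n) δ := fun n =>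
      (hES n).trans (Set.inter_subset_right.trans Metric.ball_subset_closedBall)
    have hEU : ∀ n, E n ⊆ U := fun n => (hEA n).trans (hA.trans hKU)
    have hEK' : ∀ n, E n ⊆ K' := fun n => (hEb n).trans (hball _ (hpK n))
    have hUnionE : ⋃ n, E n = A := by
      rw [hEdef, iUnion_disjointed]
      apply Set.Subset.antisymm
      · exact Set.iUnion_subset fun n => Set.inter_subset_left
      · intro z hz
        obtain ⟨n, hzn⟩ := Set.mem_iUnion.mp (hcov hz)
        exact Set.mem_iUnion.mpr ⟨n, ⟨hz, hzn⟩⟩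
    have hgim : ∀ n, MeasurableSet (g '' E n) := fun n =>
      (hEm n).image_of_continuousOn_injOn (hgd.continuousOn.mono (hEU n))
        (hbij.injOn.mono (hEU n))
    have hgdisj : Pairwise (Function.onFun Disjoint fun n => g '' E n) := by
      intro m n hmn
      refine Set.disjoint_left.mpr ?_
      rintro x ⟨u, hu, rfl⟩ ⟨v, hv, hvu⟩
      have huv : v = u := hbij.injOn (hEU n hv) (hEU m hu) hvu
      rw [huv] at hv
      exact Set.disjoint_left.mp (hEdisj hmn) hu hv
    -- upper bound per piece
    have hupper : ∀ n, μH[t] (g '' E n) ≤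
        ENNReal.ofReal ((1 + θ) ^ t) * ∫⁻ z in E n, ENNReal.ofReal (‖g' z‖ ^ t) ∂(μH[t]) := by
      intro n
      set a : ℝ := ‖g' (p n)‖ with hadef
      have hLip : LipschitzOnWith (Real.toNNReal (a + ε)) g (E n) := by
        rw [lipschitzOnWith_iff_dist_le_mul]
        intro x hx y hy
        rw [Real.coe_toNNReal _ (by positivity)]
        exact hub (p n) (hpK n) x (hEb n hx) y (hEb n hy)
      have h1 : μH[t] (g '' E n) ≤ ENNReal.ofReal ((a + ε) ^ t) * μH[t] (E n) := by
        have h2 := hLip.hausdorffMeasure_image_le ht.le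
        rwa [show ((Real.toNNReal (a + ε)) : ℝ≥0∞) = ENNReal.ofReal (a + ε) from rfl,
          ENNReal.ofReal_rpow_of_pos (by positivity)] at h2
      refine h1.trans ?_
      rw [← setLIntegral_const (E n) (ENNReal.ofReal ((a + ε) ^ t)),
        ← lintegral_const_mul' _ _ ENNReal.ofReal_ne_top]
      refine setLIntegral_mono' (hEm n) fun z hz => ?_
      have hzc : c ≤ ‖g' z‖ := hcle z (hEK' n hz)
      have hclose : ‖g' z - g' (p n)‖ ≤ ε := hg'close (p n) (hpK n) z (hEb n hz)
      have htri : a ≤ ‖g' z‖ + ε := by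
        have h4 := norm_sub_norm_le (g' (p n)) (g' z)
        rw [norm_sub_rev] at h4
        linarith
      have hcomp : a + ε ≤ (1 + θ) * ‖g' z‖ := by nlinarith
      rw [← ENNReal.ofReal_mul (by positivity),
        ← Real.mul_rpow (by positivity) (norm_nonneg _)]
      exact ENNReal.ofReal_le_ofReal (Real.rpow_le_rpow (by positivity) hcomp ht.le)
    -- lower bound per piece
    have hlower : ∀ n,
        ENNReal.ofReal ((1 - θ) ^ t) * ∫⁻ z in E n, ENNReal.ofReal (‖g' z‖ ^ t) ∂(μH[t])
          ≤ μH[t] (g '' E n) := by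
      intro n
      set a : ℝ := ‖g' (p n)‖ with hadef
      have hca : c ≤ a := hcle _ (hKK' (hpK n))
      have hk0 : 0 < a - ε := by nlinarith
      have hLip : LipschitzOnWith (Real.toNNReal (a - ε)⁻¹) h (g '' E n) := by
        rw [lipschitzOnWith_iff_dist_le_mul]
        rintro x ⟨u, hu, rfl⟩ y ⟨v, hv, rfl⟩
        rw [Real.coe_toNNReal _ (by positivity), hinv.1 (hEU n hu), hinv.1 (hEU n hv)]
        have h1 := hlb (p n) (hpK n) u (hEb n hu) v (hEb n hv)
        calc dist u v = (a - ε)⁻¹ * ((a - ε) * dist u v) := by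
              field_simp
          _ ≤ (a - ε)⁻¹ * dist (g u) (g v) :=
              mul_le_mul_of_nonneg_left h1 (by positivity)
      have him : h '' (g '' E n) = E n := by
        rw [Set.image_image]
        have hco : ∀ u ∈ E n, h (g u) = u := fun u hu => hinv.1 (hEU n hu)
        calc (fun u => h (g u)) '' E n = id '' E n := Set.image_congr hco
          _ = E n := Set.image_id (E n)
      have h5 : μH[t] (E n) ≤ ENNReal.ofReal ((a - ε)⁻¹ ^ t) * μH[t] (g '' E n) := by
        have h2 := hLip.hausdorffMeasure_image_le ht.le
        rw [him] at h2
        rwa [show ((Real.toNNReal (a - ε)⁻¹) : ℝ≥0∞) = ENNReal.ofReal (a - ε)⁻¹ from rfl,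
          ENNReal.ofReal_rpow_of_pos (by positivity)] at h2
      have h6 : ENNReal.ofReal ((a - ε) ^ t) * μH[t] (E n) ≤ μH[t] (g '' E n) := by
        calc ENNReal.ofReal ((a - ε) ^ t) * μH[t] (E n)
            ≤ ENNReal.ofReal ((a - ε) ^ t) *
                (ENNReal.ofReal ((a - ε)⁻¹ ^ t) * μH[t] (g '' E n)) := mul_le_mul_right h5 _
          _ = μH[t] (g '' E n) := by
              rw [← mul_assoc, ← ENNReal.ofReal_mul (by positivity),
                ← Real.mul_rpow hk0.le (by positivity), mul_inv_cancel₀ hk0.ne',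
                Real.one_rpow, ENNReal.ofReal_one, one_mul]
      refine le_trans ?_ h6
      rw [← setLIntegral_const (E n) (ENNReal.ofReal ((a - ε) ^ t)),
        ← lintegral_const_mul' _ _ ENNReal.ofReal_ne_top]
      refine setLIntegral_mono' (hEm n) fun z hz => ?_
      have hzc : c ≤ ‖g' z‖ := hcle z (hEK' n hz)
      have hclose : ‖g' z - g' (p n)‖ ≤ ε := hg'close (p n) (hpK n) z (hEb n hz)
      have htri : ‖g' z‖ ≤ a + ε := by
        have h4 := norm_sub_norm_le (g' z) (g' (p n))
        linarith
      have hcomp : (1 - θ) * ‖g' z‖ ≤ a - ε := by nlinarith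
      rw [← ENNReal.ofReal_mul (Real.rpow_nonneg (by linarith) t),
        ← Real.mul_rpow (by linarith) (norm_nonneg _)]
      refine ENNReal.ofReal_le_ofReal (Real.rpow_le_rpow ?_ hcomp ht.le)
      nlinarith [norm_nonneg (g' z)]
    constructor
    · calc μH[t] (g '' A) = μH[t] (⋃ n, g '' E n) := by rw [← Set.image_iUnion, hUnionE]
        _ ≤ ∑' n, μH[t] (g '' E n) := measure_iUnion_le _
        _ ≤ ∑' n, ENNReal.ofReal ((1 + θ) ^ t) *
              ∫⁻ z in E n, ENNReal.ofReal (‖g' z‖ ^ t) ∂(μH[t]) :=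
            ENNReal.tsum_le_tsum hupper
        _ = ENNReal.ofReal ((1 + θ) ^ t) *
              ∑' n, ∫⁻ z in E n, ENNReal.ofReal (‖g' z‖ ^ t) ∂(μH[t]) :=
            ENNReal.tsum_mul_left
        _ = ENNReal.ofReal ((1 + θ) ^ t) * I := by
            rw [← lintegral_iUnion hEm hEdisj, hUnionE]
    · calc ENNReal.ofReal ((1 - θ) ^ t) * I
          = ∑' n, ENNReal.ofReal ((1 - θ) ^ t) *
              ∫⁻ z in E n, ENNReal.ofReal (‖g' z‖ ^ t) ∂(μH[t]) := by
            rw [ENNReal.tsum_mul_left, ← lintegral_iUnion hEm hEdisj, hUnionE]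
        _ ≤ ∑' n, μH[t] (g '' E n) := ENNReal.tsum_le_tsum hlower
        _ = μH[t] (⋃ n, g '' E n) := (measure_iUnion hgdisj hgim).symm
        _ = μH[t] (g '' A) := by rw [← Set.image_iUnion, hUnionE]
  -- squeeze
  have hle : μH[t] (g '' A) ≤ I := by
    have htend : Filter.Tendsto (fun θ : ℝ => ENNReal.ofReal ((1 + θ) ^ t) * I)
        (nhdsWithin 0 (Set.Ioi 0)) (nhds I) := by
      have h1 : Filter.Tendsto (fun θ : ℝ => (1 + θ) ^ t) (nhdsWithin 0 (Set.Ioi 0))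
          (nhds 1) := by
        have h0 : Filter.Tendsto (fun θ : ℝ => 1 + θ) (nhdsWithin 0 (Set.Ioi 0)) (nhds 1) := by
          have h0' : Filter.Tendsto (fun θ : ℝ => 1 + θ) (nhds 0) (nhds (1 + 0)) :=
            (continuous_const.add continuous_id).tendsto 0
          rw [add_zero] at h0'
          exact h0'.mono_left nhdsWithin_le_nhds
        have := h0.rpow_const (Or.inr ht.le)
        simpa using this
      have h2 : Filter.Tendsto (fun θ : ℝ => ENNReal.ofReal ((1 + θ) ^ t))
          (nhdsWithin 0 (Set.Ioi 0)) (nhds 1) := by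
        have := (ENNReal.continuous_ofReal.tendsto 1).comp h1
        simpa [Function.comp_def] using this
      have h3 := ENNReal.Tendsto.mul_const (b := I) h2 (Or.inl one_ne_zero)
      rw [one_mul] at h3
      exact h3
    refine ge_of_tendsto htend ?_
    filter_upwards [Ioo_mem_nhdsGT_of_mem (Set.mem_Ico.mpr ⟨le_refl (0:ℝ), one_pos⟩)] with θ hθ
    exact (main θ hθ.1 hθ.2).1
  have hge : I ≤ μH[t] (g '' A) := by
    have htend : Filter.Tendsto (fun θ : ℝ => ENNReal.ofReal ((1 - θ) ^ t) * I)
        (nhdsWithin 0 (Set.Ioi 0)) (nhds I) := by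
      have h1 : Filter.Tendsto (fun θ : ℝ => (1 - θ) ^ t) (nhdsWithin 0 (Set.Ioi 0))
          (nhds 1) := by
        have h0 : Filter.Tendsto (fun θ : ℝ => 1 - θ) (nhdsWithin 0 (Set.Ioi 0)) (nhds 1) := by
          have h0' : Filter.Tendsto (fun θ : ℝ => 1 - θ) (nhds 0) (nhds (1 - 0)) :=
            (continuous_const.sub continuous_id).tendsto 0
          rw [sub_zero] at h0'
          exact h0'.mono_left nhdsWithin_le_nhds
        have := h0.rpow_const (Or.inr ht.le)
        simpa using this
      have h2 : Filter.Tendsto (fun θ : ℝ => ENNReal.ofReal ((1 - θ) ^ t))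
          (nhdsWithin 0 (Set.Ioi 0)) (nhds 1) := by
        have := (ENNReal.continuous_ofReal.tendsto 1).comp h1
        simpa [Function.comp_def] using this
      have h3 := ENNReal.Tendsto.mul_const (b := I) h2 (Or.inl one_ne_zero)
      rw [one_mul] at h3
      exact h3
    refine le_of_tendsto htend ?_
    filter_upwards [Ioo_mem_nhdsGT_of_mem (Set.mem_Ico.mpr ⟨le_refl (0:ℝ), one_pos⟩)] with θ hθ
    exact (main θ hθ.1 hθ.2).2
  exact le_antisymm hle hge

end
end
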